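/- The generating function of the Schur polynomials satisfies Σ_{n≥0} D_n(q) x^n = Σ_{j≥0} q^{j²} x^{2j+1} / ((1−x)(1−qx)···(1−q^j x)). -/

import Mathlib

open Finset PowerSeries

variable {R : Type*} [CommRing R]

/-- The Gaussian (q-)binomial coefficient, via the Pascal-type recurrence
`[n+1, k+1] = q^(n-k) [n, k] + [n, k+1]`. -/
def qbinom (q : R) : ℕ → ℕ → R
  | _, 0 => 1
  | 0, _ + 1 => 0
  | n + 1, k + 1 => qbinom q n k * q ^ (n - k) + qbinom q n (k + 1)

/-- The q-biperiodic Fibonacci sequence. -/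
def biF (a b q : R) : ℕ → R
  | 0 => 0
  | 1 => 1
  | n + 2 => (if (n + 2) % 2 = 0 then a else b) * biF a b q (n + 1) + q ^ n * biF a b q n

/-- The auxiliary q-biperiodic Fibonacci sequence (same recurrence, initial values 1, 0). -/
def biFhat (a b q : R) : ℕ → R
  | 0 => 1
  | 1 => 0
  | n + 2 => (if (n + 2) % 2 = 0 then a else b) * biFhat a b q (n + 1) + q ^ n * biFhat a b q n

/-- The biperiodic Fibonacci sequence. -/
def biT (a b : ℕ) : ℕ → ℕ
  | 0 => 0
  | 1 => 1
  | n + 2 => (if (n + 2) % 2 = 0 then a else b) * biT a b (n + 1) + biT a b n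

/-- The Schur polynomials D_n(q). -/
def schurD (q : R) : ℕ → R
  | 0 => 0
  | 1 => 1
  | n + 2 => schurD q (n + 1) + q ^ n * schurD q n

/-- The auxiliary Schur polynomials with initial values 1, 0. -/
def schurDhat (q : R) : ℕ → R
  | 0 => 1
  | 1 => 0
  | n + 2 => schurDhat q (n + 1) + q ^ n * schurDhat q n

/-- The shifted q-biperiodic Fibonacci sequence F^(s)_n(q). -/
def biFs (a b q : R) (s : ℕ) : ℕ → R
  | 0 => 0
  | 1 => 1
  | n + 2 =>
      (if (n + 2) % 2 = 0 then a ^ ((s + 1) % 2) * b ^ (1 - (s + 1) % 2)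
       else a ^ (1 - (s + 1) % 2) * b ^ ((s + 1) % 2)) * biFs a b q s (n + 1)
        + q ^ (n + s) * biFs a b q s n

/-- Coefficients of `(∏ i ∈ range (j+1), (1 - q^i x))⁻¹`. -/
def gseq (q : R) : ℕ → ℕ → R
  | 0, _ => 1
  | j + 1, 0 => 1
  | j + 1, n + 1 => q ^ (j + 1) * gseq q (j + 1) n + gseq q j (n + 1)

lemma gseq_zero_right (q : R) (j : ℕ) : gseq q j 0 = 1 := by
  cases j <;> simp [gseq]

lemma gseq_zero_left (q : R) (n : ℕ) : gseq q 0 n = 1 := by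
  cases n <;> simp [gseq]

lemma gseq_succ_succ (q : R) (j n : ℕ) :
    gseq q (j + 1) (n + 1) = q ^ (j + 1) * gseq q (j + 1) n + gseq q j (n + 1) := by
  rw [gseq]

/-- The second Pascal-type recurrence for `gseq`. -/
lemma gseq_pascal (q : R) : ∀ n j,
    gseq q (j + 1) (n + 1) = gseq q (j + 1) n + q ^ (n + 1) * gseq q j (n + 1) := by
  intro n
  induction n with
  | zero =>
    intro j
    induction j with
    | zero =>
      simp [gseq_succ_succ, gseq_zero_left, gseq_zero_right]; ring
    | succ j ihj =>
      have d1 := gseq_succ_succ q (j + 1) 0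
      have d2 := gseq_succ_succ q j 0
      simp only [gseq_zero_right] at d1 d2 ihj ⊢
      linear_combination d1 + ihj - q * d2
  | succ n ihn =>
    intro j
    induction j with
    | zero =>
      have d1 := gseq_succ_succ q 0 (n + 1)
      have d2 := gseq_succ_succ q 0 n
      have h1 := ihn 0
      simp only [gseq_zero_left] at d1 d2 h1 ⊢
      linear_combination d1 + q * h1 - d2
    | succ j ihj =>
      have d1 := gseq_succ_succ q (j + 1) (n + 1)
      have d2 := gseq_succ_succ q (j + 1) n
      have d3 := gseq_succ_succ q j (n + 1)
      have h1 := ihn (j + 1)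
      have h2 := ihj
      linear_combination d1 + q ^ (j + 2) * h1 - d2 - q ^ (n + 2) * d3 + h2

lemma mk_mul_one_sub {K : Type*} [Field K] (f g : ℕ → K) (c : K)
    (h0 : f 0 = g 0) (hs : ∀ n, f (n + 1) = c * f n + g (n + 1)) :
    PowerSeries.mk f * (1 - PowerSeries.C c * PowerSeries.X) = PowerSeries.mk g := by
  ext n
  rw [mul_sub, mul_one, map_sub]
  cases n with
  | zero =>
    simp [h0]
  | succ n =>
    rw [show PowerSeries.mk f * (PowerSeries.C c * PowerSeries.X)
        = PowerSeries.C c * (PowerSeries.mk f * PowerSeries.X) by ring,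
      coeff_C_mul, coeff_succ_mul_X, coeff_mk, coeff_mk, coeff_mk, hs n]
    ring

lemma mk_gseq_mul {K : Type*} [Field K] (q : K) (j : ℕ) :
    PowerSeries.mk (gseq q j) *
      (∏ i ∈ Finset.range (j + 1), (1 - PowerSeries.C (q ^ i) * PowerSeries.X)) = 1 := by
  induction j with
  | zero =>
    rw [Finset.prod_range_one, mk_mul_one_sub (gseq q 0) (fun n => if n = 0 then 1 else 0) (q ^ 0)]
    · ext n; rw [coeff_mk, coeff_one]
    · simp [gseq_zero_left]
    · intro n; simp [gseq_zero_left]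
  | succ j ih =>
    rw [Finset.prod_range_succ, show
      PowerSeries.mk (gseq q (j + 1)) *
        ((∏ i ∈ Finset.range (j + 1), (1 - PowerSeries.C (q ^ i) * PowerSeries.X)) *
          (1 - PowerSeries.C (q ^ (j + 1)) * PowerSeries.X)) =
      (PowerSeries.mk (gseq q (j + 1)) * (1 - PowerSeries.C (q ^ (j + 1)) * PowerSeries.X)) *
        (∏ i ∈ Finset.range (j + 1), (1 - PowerSeries.C (q ^ i) * PowerSeries.X)) by ring,
      mk_mul_one_sub (gseq q (j + 1)) (gseq q j) (q ^ (j + 1))]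
    · exact ih
    · rw [gseq_zero_right, gseq_zero_right]
    · intro n; exact gseq_succ_succ q j n

lemma inv_prod_eq {K : Type*} [Field K] (q : K) (j : ℕ) :
    (∏ i ∈ Finset.range (j + 1), (1 - PowerSeries.C (q ^ i) * PowerSeries.X))⁻¹ =
      PowerSeries.mk (gseq q j) := by
  symm
  have hc : PowerSeries.constantCoeff
      (∏ i ∈ Finset.range (j + 1), (1 - PowerSeries.C (q ^ i) * PowerSeries.X)) ≠ 0 := by
    rw [map_prod]
    simp
  rw [PowerSeries.eq_inv_iff_mul_eq_one hc]
  exact mk_gseq_mul q j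

/-- Single term of the sum. -/
noncomputable def tt {K : Type*} [Field K] (q : K) (m j : ℕ) : K :=
  if 2 * j + 1 ≤ m then q ^ (j ^ 2) * gseq q j (m - (2 * j + 1)) else 0

lemma tt_key {K : Type*} [Field K] (q : K) (n j : ℕ) :
    tt q (n + 2) (j + 1) = tt q (n + 1) (j + 1) + q ^ n * tt q n j := by
  unfold tt
  by_cases h : 2 * j + 1 ≤ n
  · by_cases h2 : 2 * (j + 1) ≤ n
    · obtain ⟨k, rfl⟩ : ∃ k, n = 2 * j + 2 + k := ⟨n - (2 * j + 2), by omega⟩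
      rw [if_pos (by omega), if_pos (by omega), if_pos (by omega)]
      rw [show 2 * j + 2 + k + 2 - (2 * (j + 1) + 1) = k + 1 by omega,
        show 2 * j + 2 + k + 1 - (2 * (j + 1) + 1) = k by omega,
        show 2 * j + 2 + k - (2 * j + 1) = k + 1 by omega,
        gseq_pascal q k j]
      rw [show (j + 1) ^ 2 = j ^ 2 + (2 * j + 1) by ring]
      ring_nf
    · obtain rfl : n = 2 * j + 1 := by omega
      rw [if_pos (by omega), if_neg (by omega), if_pos (by omega)]
      rw [show 2 * j + 1 + 2 - (2 * (j + 1) + 1) = 0 by omega,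
        show 2 * j + 1 - (2 * j + 1) = 0 by omega, gseq_zero_right, gseq_zero_right]
      rw [show (j + 1) ^ 2 = (2 * j + 1) + j ^ 2 by ring, pow_add]
      ring
  · rw [if_neg (by omega), if_neg (by omega), if_neg (by omega)]
    ring

lemma tt_top {K : Type*} [Field K] (q : K) (m j : ℕ) (h : m < 2 * j + 1) : tt q m j = 0 := by
  unfold tt
  rw [if_neg (by omega)]

lemma schurD_eq_sum {K : Type*} [Field K] (q : K) :
    ∀ m, schurD q m = ∑ j ∈ Finset.range (m + 1), tt q m j := by
  intro m
  induction m using Nat.strong_induction_on with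
  | _ m ih =>
    match m with
    | 0 => simp [schurD, tt]
    | 1 =>
      rw [Finset.sum_range_succ, Finset.sum_range_one]
      simp [schurD, tt, gseq_zero_right]
    | n + 2 =>
      have hD : schurD q (n + 2) = schurD q (n + 1) + q ^ n * schurD q n := by rw [schurD]
      rw [hD, ih (n + 1) (by omega), ih n (by omega)]
      rw [Finset.sum_range_succ' (fun j => tt q (n + 2) j)]
      have e0 : tt q (n + 2) 0 = tt q (n + 1) 0 := by
        unfold tt
        rw [if_pos (by omega), if_pos (by omega)]
        simp [gseq_zero_left]
      rw [e0]
      have : ∀ j ∈ Finset.range (n + 2), tt q (n + 2) (j + 1)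
          = tt q (n + 1) (j + 1) + q ^ n * tt q n j := fun j _ => tt_key q n j
      rw [Finset.sum_congr rfl this, Finset.sum_add_distrib, ← Finset.mul_sum]
      have e1 : ∑ j ∈ Finset.range (n + 2), tt q (n + 1) (j + 1) + tt q (n + 1) 0
          = ∑ j ∈ Finset.range (n + 2), tt q (n + 1) j := by
        rw [← Finset.sum_range_succ' (fun j => tt q (n + 1) j) (n + 2),
          Finset.sum_range_succ (fun j => tt q (n + 1) j) (n + 2),
          tt_top q (n + 1) (n + 2) (by omega), add_zero]
      have e2 : ∑ j ∈ Finset.range (n + 2), tt q n j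
          = ∑ j ∈ Finset.range (n + 1), tt q n j := by
        rw [Finset.sum_range_succ, tt_top q n (n + 1) (by omega), add_zero]
      simp only [show n + 1 + 1 = n + 2 from rfl]
      linear_combination -e1 - q ^ n * e2

theorem stmt9 {K : Type*} [Field K] (q : K) (m : ℕ) :
    PowerSeries.coeff m (PowerSeries.mk (schurD q)) =
      PowerSeries.coeff m
        (∑ j ∈ Finset.range (m + 1),
          PowerSeries.C (q ^ (j ^ 2)) * PowerSeries.X ^ (2 * j + 1) *
            (∏ i ∈ Finset.range (j + 1), (1 - PowerSeries.C (q ^ i) * PowerSeries.X))⁻¹) := by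
  rw [coeff_mk, map_sum]
  have hterm : ∀ j, PowerSeries.coeff m
      (PowerSeries.C (q ^ (j ^ 2)) * PowerSeries.X ^ (2 * j + 1) *
        (∏ i ∈ Finset.range (j + 1), (1 - PowerSeries.C (q ^ i) * PowerSeries.X))⁻¹)
      = tt q m j := by
    intro j
    rw [inv_prod_eq, show
      PowerSeries.C (q ^ (j ^ 2)) * PowerSeries.X ^ (2 * j + 1) * PowerSeries.mk (gseq q j)
      = PowerSeries.C (q ^ (j ^ 2)) * (PowerSeries.mk (gseq q j) * PowerSeries.X ^ (2 * j + 1))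
      by ring, coeff_C_mul, PowerSeries.coeff_mul_X_pow', coeff_mk]
    unfold tt
    rw [mul_ite, mul_zero]
  rw [Finset.sum_congr rfl (fun j _ => hterm j)]
  exact schurD_eq_sum q m
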